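/- Let n ≥ 2 and let λ_0, …, λ_n be pairwise distinct complex numbers, and let sq : ℙ(ℂ^{n+1}) → ℙ(ℂ^{n+1}) be the map [x_0 : ⋯ : x_n] ↦ [x_0² : ⋯ : x_n²]. For two points [x], [x′] of the Humbert–Edge curve C of type n, one has sq([x]) = sq([x′]) if and only if there exist s ∈ ℂ \ {0} and signs ε_0, …, ε_n ∈ {1, −1} such that x′_i = s·ε_i·x_i for all i. Moreover, if all homogeneous coordinates of [x] ∈ C are nonzero, then the set {[x′] ∈ C : sq([x′]) = sq([x])} has exactly 2^n elements, while if exactly one coordinate of [x] vanishes this set has exactly 2^{n−1} elements. -/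

import Mathlib

/-- The Humbert–Edge curve of type `n` attached to the pairwise distinct complex numbers
`λ_0, …, λ_n`. -/
def humbertEdge (n : ℕ) (lam : Fin (n + 1) → ℂ) :
    Set (Projectivization ℂ (Fin (n + 1) → ℂ)) :=
  {P | ∀ k < n - 1, ∑ i, lam i ^ k * P.rep i ^ 2 = 0}

/-- The squaring map `sq : ℙ(ℂ^{n+1}) → ℙ(ℂ^{n+1})`, `[x_0 : ⋯ : x_n] ↦ [x_0² : ⋯ : x_n²]`. -/
noncomputable def sqMap (n : ℕ) (P : Projectivization ℂ (Fin (n + 1) → ℂ)) :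
    Projectivization ℂ (Fin (n + 1) → ℂ) :=
  Projectivization.mk ℂ (fun i => P.rep i ^ 2) (by
    intro h
    apply P.rep_nonzero
    funext i
    have h2 := congrFun h i
    simp only [Pi.zero_apply, pow_eq_zero_iff, ne_eq, OfNat.ofNat_ne_zero,
      not_false_iff] at h2
    simpa using h2)

lemma mk_eq_mk_iff' {n : ℕ} (v w : Fin (n + 1) → ℂ) (hv : v ≠ 0) (hw : w ≠ 0) :
    Projectivization.mk ℂ v hv = Projectivization.mk ℂ w hw ↔
      ∃ a : ℂ, a ≠ 0 ∧ ∀ i, v i = a * w i := by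
  rw [Projectivization.mk_eq_mk_iff]
  constructor
  · rintro ⟨a, ha⟩
    refine ⟨(a : ℂ), a.ne_zero, fun i => ?_⟩
    have := congrFun ha i
    simpa [Units.smul_def] using this.symm
  · rintro ⟨a, ha, h⟩
    refine ⟨Units.mk0 a ha, funext fun i => ?_⟩
    simpa [Units.smul_def] using (h i).symm

lemma sq_key {n : ℕ} (P P' : Projectivization ℂ (Fin (n + 1) → ℂ)) :
    sqMap n P = sqMap n P' ↔
      ∃ s : ℂ, s ≠ 0 ∧ ∃ ε : Fin (n + 1) → ℂ,
        (∀ i, ε i = 1 ∨ ε i = -1) ∧ ∀ i, P'.rep i = s * ε i * P.rep i := by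
  rw [sqMap, sqMap, mk_eq_mk_iff']
  constructor
  · rintro ⟨a, ha, h⟩
    have ha' : (a : ℂ)⁻¹ ≠ 0 := inv_ne_zero ha
    obtain ⟨s, hs2⟩ := IsAlgClosed.exists_pow_nat_eq (a⁻¹ : ℂ) (n := 2) (by norm_num)
    have hs : s ≠ 0 := fun h0 => ha' (by rw [← hs2, h0]; ring)
    classical
    refine ⟨s, hs, fun i => if P.rep i = 0 then 1 else P'.rep i / (s * P.rep i), fun i => ?_, fun i => ?_⟩
    · by_cases hx : P.rep i = 0
      · simp [hx]
      · have h2 : P'.rep i ^ 2 = (s * P.rep i) ^ 2 := by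
          rw [mul_pow, hs2, h i, inv_mul_cancel_left₀ ha]
        have hP'ne : P'.rep i ≠ 0 := by
          intro hz
          have h4 : (s * P.rep i) ^ 2 = 0 := by rw [← h2, hz]; ring
          exact mul_ne_zero hs hx (pow_eq_zero_iff two_ne_zero |>.mp h4)
        have hsq : (P'.rep i / (s * P.rep i)) * (P'.rep i / (s * P.rep i)) = 1 := by
          rw [div_mul_div_comm, ← sq, ← sq, ← h2]
          exact div_self (pow_ne_zero 2 hP'ne)
        simp only [if_neg hx]
        exact mul_self_eq_one_iff.mp hsq
    · by_cases hx : P.rep i = 0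
      · have h2 : P'.rep i ^ 2 = a⁻¹ * P.rep i ^ 2 := by
          rw [h i, inv_mul_cancel_left₀ ha]
        rw [hx] at h2
        simp only [hx, mul_zero]
        have h3 : P'.rep i ^ 2 = 0 := by simpa using h2
        exact pow_eq_zero_iff (by norm_num) |>.mp h3
      · simp only [if_neg hx]
        field_simp
  · rintro ⟨s, hs, ε, hε, h⟩
    refine ⟨(s ^ 2)⁻¹, inv_ne_zero (pow_ne_zero 2 hs), fun i => ?_⟩
    have hε2 : ε i ^ 2 = 1 := by rcases hε i with h1 | h1 <;> simp [h1]
    rw [h i, mul_pow, mul_pow, hε2]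
    field_simp


open Classical in
noncomputable def epsAux {n : ℕ} (x : Fin (n + 1) → ℂ) (i0 : Fin (n + 1))
    (b : {i : Fin (n + 1) // i ≠ i0 ∧ x i ≠ 0} → Bool) (i : Fin (n + 1)) : ℂ :=
  if h : i ≠ i0 ∧ x i ≠ 0 then (if b ⟨i, h⟩ then 1 else -1) else 1

lemma epsAux_sign {n : ℕ} (x : Fin (n + 1) → ℂ) (i0 : Fin (n + 1))
    (b : {i : Fin (n + 1) // i ≠ i0 ∧ x i ≠ 0} → Bool) (i : Fin (n + 1)) :
    epsAux x i0 b i = 1 ∨ epsAux x i0 b i = -1 := by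
  unfold epsAux
  split
  · split
    · left; rfl
    · right; rfl
  · left; rfl

lemma epsAux_sq {n : ℕ} (x : Fin (n + 1) → ℂ) (i0 : Fin (n + 1))
    (b : {i : Fin (n + 1) // i ≠ i0 ∧ x i ≠ 0} → Bool) (i : Fin (n + 1)) :
    epsAux x i0 b i ^ 2 = 1 := by
  rcases epsAux_sign x i0 b i with h | h <;> simp [h]

lemma epsAux_i0 {n : ℕ} (x : Fin (n + 1) → ℂ) (i0 : Fin (n + 1))
    (b : {i : Fin (n + 1) // i ≠ i0 ∧ x i ≠ 0} → Bool) :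
    epsAux x i0 b i0 = 1 := by
  unfold epsAux
  rw [dif_neg]
  simp

lemma fiber_ncard {n : ℕ} (lam : Fin (n + 1) → ℂ) (P : Projectivization ℂ (Fin (n + 1) → ℂ))
    (hP : P ∈ humbertEdge n lam) (i0 : Fin (n + 1)) (h0 : P.rep i0 ≠ 0) :
    {R ∈ humbertEdge n lam | sqMap n R = sqMap n P}.ncard =
      2 ^ (Nat.card {i : Fin (n + 1) // i ≠ i0 ∧ P.rep i ≠ 0}) := by
  classical
  set x := P.rep with hxdef
  have hvb : ∀ b : {i : Fin (n + 1) // i ≠ i0 ∧ x i ≠ 0} → Bool,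
      (fun i => epsAux x i0 b i * x i) ≠ 0 := by
    intro b hzero
    have h1 := congrFun hzero i0
    simp only [Pi.zero_apply, epsAux_i0, one_mul] at h1
    exact h0 h1
  set g : ({i : Fin (n + 1) // i ≠ i0 ∧ x i ≠ 0} → Bool) →
      Projectivization ℂ (Fin (n + 1) → ℂ) :=
    fun b => Projectivization.mk ℂ (fun i => epsAux x i0 b i * x i) (hvb b) with hgdef
  have hrep : ∀ b, ∃ a : ℂ, a ≠ 0 ∧ ∀ i, (g b).rep i = a * (epsAux x i0 b i * x i) := by
    intro b
    exact (mk_eq_mk_iff' ((g b).rep) (fun i => epsAux x i0 b i * x i)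
      (g b).rep_nonzero (hvb b)).mp (by rw [Projectivization.mk_rep])
  have hmem : ∀ b, g b ∈ humbertEdge n lam ∧ sqMap n (g b) = sqMap n P := by
    intro b
    obtain ⟨a, ha, hai⟩ := hrep b
    constructor
    · intro k hk
      have hsum : ∀ i : Fin (n + 1), lam i ^ k * (g b).rep i ^ 2
          = a ^ 2 * (lam i ^ k * x i ^ 2) := by
        intro i
        rw [hai i, mul_pow, mul_pow, epsAux_sq]
        ring
      calc ∑ i, lam i ^ k * (g b).rep i ^ 2
          = ∑ i, a ^ 2 * (lam i ^ k * x i ^ 2) := Finset.sum_congr rfl (fun i _ => hsum i)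
        _ = a ^ 2 * ∑ i, lam i ^ k * x i ^ 2 := (Finset.mul_sum _ _ _).symm
        _ = 0 := by rw [hP k hk, mul_zero]
    · refine ((sq_key P (g b)).mpr ⟨a, ha, epsAux x i0 b, epsAux_sign x i0 b, fun i => ?_⟩).symm
      rw [hai i]; ring
  have hSeq : {R ∈ humbertEdge n lam | sqMap n R = sqMap n P} = Set.range g := by
    ext R
    constructor
    · rintro ⟨hR1, hR2⟩
      obtain ⟨s, hs, ε, hεs, hεe⟩ := (sq_key P R).mp hR2.symm
      have hε0ne : ε i0 ≠ 0 := by rcases hεs i0 with h | h <;> simp [h]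
      have hε0sq : ε i0 * ε i0 = 1 := by rcases hεs i0 with h | h <;> simp [h]
      refine ⟨fun j => decide (ε j.1 * ε i0 = 1), ?_⟩
      rw [hgdef]
      rw [← Projectivization.mk_rep R]
      apply (mk_eq_mk_iff' _ _ _ _).mpr
      refine ⟨(s * ε i0)⁻¹, inv_ne_zero (mul_ne_zero hs hε0ne), fun i => ?_⟩
      rw [hεe i]
      by_cases hxi : x i = 0
      · rw [show P.rep i = 0 from hxi]; rw [show x i = 0 from hxi]; ring
      · by_cases hii0 : i = i0
        · subst hii0
          rw [epsAux_i0]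
          field_simp
          rfl
        · have hsign : epsAux x i0 (fun j => decide (ε j.1 * ε i0 = 1)) i = ε i * ε i0 := by
            unfold epsAux
            rw [dif_pos ⟨hii0, hxi⟩]
            by_cases hd : ε i * ε i0 = 1
            · simp [hd]
            · rw [if_neg (by simpa using hd)]
              rcases hεs i with h1 | h1 <;> rcases hεs i0 with h2 | h2 <;>
                simp [h1, h2] at hd ⊢
          rw [hsign]
          field_simp
          linear_combination ε i * x i * hε0sq
    · rintro ⟨b, rfl⟩
      exact ⟨(hmem b).1, (hmem b).2⟩
  have hginj : Function.Injective g := by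
    intro b c hbc
    obtain ⟨a, ha, hai⟩ := (mk_eq_mk_iff' _ _ (hvb b) (hvb c)).mp hbc
    have ha1 : a = 1 := by
      have h1 := hai i0
      rw [epsAux_i0, epsAux_i0, one_mul] at h1
      have h2 : (a - 1) * x i0 = 0 := by linear_combination -h1
      rcases mul_eq_zero.mp h2 with h3 | h3
      · exact sub_eq_zero.mp h3
      · exact absurd h3 h0
    funext j
    obtain ⟨j, hj⟩ := j
    have h2 := hai j
    rw [ha1, one_mul] at h2
    have heq : epsAux x i0 b j = epsAux x i0 c j := mul_right_cancel₀ hj.2 h2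
    unfold epsAux at heq
    rw [dif_pos hj, dif_pos hj] at heq
    cases hb : b ⟨j, hj⟩ <;> cases hc : c ⟨j, hj⟩ <;>
      rw [hb, hc] at heq <;> first | rfl | norm_num at heq
  rw [hSeq, ← Set.image_univ, Set.ncard_image_of_injective _ hginj, Set.ncard_univ]
  simp [Nat.card_eq_fintype_card, Fintype.card_fun]


/-- Let `n ≥ 2` and `λ_0, …, λ_n` pairwise distinct complex numbers.  For
points `[x], [x']` of the Humbert–Edge curve `C` of type `n`, one has `sq [x] = sq [x']` if
and only if there exist `s ≠ 0` and signs `ε_i ∈ {1, -1}` with `x'_i = s ε_i x_i` for all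
`i`.  Moreover, if all homogeneous coordinates of `[x] ∈ C` are nonzero then the fiber
`{[x'] ∈ C : sq [x'] = sq [x]}` has exactly `2^n` elements, while if exactly one coordinate
of `[x]` vanishes this fiber has exactly `2^{n-1}` elements. -/
theorem stmt_7 (n : ℕ) (hn : 2 ≤ n) (lam : Fin (n + 1) → ℂ)
    (hlam : Function.Injective lam)
    (P P' : Projectivization ℂ (Fin (n + 1) → ℂ))
    (hP : P ∈ humbertEdge n lam) (hP' : P' ∈ humbertEdge n lam) :
    (sqMap n P = sqMap n P' ↔
      ∃ s : ℂ, s ≠ 0 ∧ ∃ ε : Fin (n + 1) → ℂ,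
        (∀ i, ε i = 1 ∨ ε i = -1) ∧ ∀ i, P'.rep i = s * ε i * P.rep i) ∧
    ((∀ i, P.rep i ≠ 0) →
      {R ∈ humbertEdge n lam | sqMap n R = sqMap n P}.ncard = 2 ^ n) ∧
    ((∃! i, P.rep i = 0) →
      {R ∈ humbertEdge n lam | sqMap n R = sqMap n P}.ncard = 2 ^ (n - 1)) := by
  classical
  refine ⟨sq_key P P', ?_, ?_⟩
  · intro hall
    rw [fiber_ncard lam P hP 0 (hall 0)]
    congr 1
    have he : ∀ i : Fin (n + 1), (i ≠ 0 ∧ P.rep i ≠ 0) ↔ ¬(i = 0) :=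
      fun i => ⟨fun h => h.1, fun h => ⟨h, hall i⟩⟩
    rw [Nat.card_congr (Equiv.subtypeEquivRight he), Nat.card_eq_fintype_card,
      Fintype.card_subtype_compl, Fintype.card_subtype_eq, Fintype.card_fin]
    omega
  · rintro ⟨j, hj, huniq⟩
    have hzero_iff : ∀ i, P.rep i = 0 ↔ i = j := fun i => ⟨fun h => huniq i h, fun h => h ▸ hj⟩
    have h1ne0 : (1 : Fin (n + 1)) ≠ 0 := by
      have h : ((1 : Fin (n + 1)) : ℕ) = 1 % (n + 1) := Fin.val_one' (n + 1)
      intro hh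
      rw [hh] at h
      simp at h
      omega
    set i0 : Fin (n + 1) := if j = 0 then 1 else 0 with hi0
    have hi0j : i0 ≠ j := by
      rw [hi0]
      split
      · rename_i h; rw [h]; exact h1ne0
      · rename_i h; exact fun hh => h hh.symm
    have h0 : P.rep i0 ≠ 0 := fun h => hi0j ((hzero_iff i0).mp h)
    rw [fiber_ncard lam P hP i0 h0]
    congr 1
    have he : ∀ i : Fin (n + 1), (i ≠ i0 ∧ P.rep i ≠ 0) ↔ (i ≠ i0 ∧ i ≠ j) := by
      intro i
      constructor
      · rintro ⟨h1, h2⟩; exact ⟨h1, fun hh => h2 ((hzero_iff i).mpr hh)⟩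
      · rintro ⟨h1, h2⟩; exact ⟨h1, fun hh => h2 (huniq i hh)⟩
    rw [Nat.card_congr (Equiv.subtypeEquivRight he), Nat.card_eq_fintype_card,
      Fintype.card_subtype]
    have hfe : (Finset.univ.filter fun i : Fin (n + 1) => i ≠ i0 ∧ i ≠ j)
        = (Finset.univ.erase i0).erase j := by
      ext i
      simp only [Finset.mem_filter, Finset.mem_erase, Finset.mem_univ, and_true, true_and]
      tauto
    rw [hfe, Finset.card_erase_of_mem (Finset.mem_erase.mpr ⟨Ne.symm hi0j, Finset.mem_univ j⟩),
      Finset.card_erase_of_mem (Finset.mem_univ i0), Finset.card_univ, Fintype.card_fin]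
    omega
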